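/- Let F = xabaxababx, P = xabx, Q = xabaxabx over the alphabet {a,b,x,y}. Let W_∞ be an infinite square-free word over {a,b,y} starting with the letter y, and let W_1, W_2, … be prefixes of W_∞ of strictly increasing lengths, each ending with the letter y. For i ≥ 1 set S_i = F W_1 F W_2 ⋯ F W_i. Then the set of square-free reducts of S_i is exactly {P W_i, Q W_i} ∪ {P W_j Q W_i : 1 ≤ j ≤ i−1}; in particular r(S_i) = i + 1. -/

import Mathlib

/-- A single square reduction: a word `U ++ (X ++ X) ++ V` (with `X` nonempty)
is replaced by `U ++ X ++ V`. -/
def Step {α : Type*} (W W' : List α) : Prop :=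
  ∃ U X V : List α, X ≠ [] ∧ W = U ++ (X ++ X) ++ V ∧ W' = U ++ X ++ V

/-- `Reaches W W'` : `W'` is obtainable from `W` by a finite sequence of square reductions. -/
def Reaches {α : Type*} (W W' : List α) : Prop := Relation.ReflTransGen Step W W'

/-- A word is square-free if it contains no square `X ++ X` (with `X` nonempty) as a factor. -/
def SquareFree {α : Type*} (W : List α) : Prop :=
  ∀ X : List α, X ≠ [] → ¬ (X ++ X) <:+: W

/-- The set of square-free reducts of `W`. -/
def Reducts {α : Type*} (W : List α) : Set (List α) := {R | Reaches W R ∧ SquareFree R}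


namespace SqRed

abbrev Λ := Fin 4

def J : List (List Λ) → List Λ
  | [] => []
  | u :: L => 2 :: u ++ J L

@[simp] lemma J_nil : J [] = [] := rfl
@[simp] lemma J_cons (u : List Λ) (L) : J (u :: L) = 2 :: u ++ J L := rfl
@[simp] lemma J_append (L₁ L₂ : List (List Λ)) : J (L₁ ++ L₂) = J L₁ ++ J L₂ := by
  induction L₁ with
  | nil => simp
  | cons u L ih => simp [ih]

lemma J_eq_nil {L : List (List Λ)} (h : J L = []) : L = [] := by
  cases L <;> simp_all [J]

lemma blockdec (Z : List Λ) : ∃ β Ns, Z = β ++ J Ns ∧ (2:Λ) ∉ β ∧ ∀ n ∈ Ns, (2:Λ) ∉ n := by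
  induction Z with
  | nil => exact ⟨[], [], rfl, by simp, by simp⟩
  | cons c Z ih =>
    obtain ⟨β, Ns, hz, hβ, hNs⟩ := ih
    by_cases hc : c = 2
    · refine ⟨[], β :: Ns, by simp [hc, hz], by simp, ?_⟩
      intro n hn
      rcases List.mem_cons.1 hn with h | h
      · subst h; exact hβ
      · exact hNs n h
    · refine ⟨c :: β, Ns, by simp [hz], ?_, hNs⟩
      simp only [List.mem_cons]
      rintro (h | h)
      · exact hc h.symm
      · exact hβ h

lemma dec_unique : ∀ (Z : List Λ) (β₁ Ns₁ β₂ Ns₂ : _), Z = β₁ ++ J Ns₁ → Z = β₂ ++ J Ns₂ →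
    (2:Λ) ∉ β₁ → (2:Λ) ∉ β₂ → (∀ n ∈ Ns₁, (2:Λ) ∉ n) → (∀ n ∈ Ns₂, (2:Λ) ∉ n) →
    β₁ = β₂ ∧ Ns₁ = Ns₂ := by
  intro Z
  induction Z with
  | nil =>
    intro β₁ Ns₁ β₂ Ns₂ h₁ h₂ _ _ _ _
    have h₁' := h₁.symm; have h₂' := h₂.symm
    rw [List.append_eq_nil_iff] at h₁' h₂'
    exact ⟨h₁'.1.trans h₂'.1.symm, (J_eq_nil h₁'.2).trans (J_eq_nil h₂'.2).symm⟩
  | cons c Z ih =>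
    intro β₁ Ns₁ β₂ Ns₂ h₁ h₂ hβ₁ hβ₂ hN₁ hN₂
    by_cases hc : c = 2
    · subst hc
      have hb1 : β₁ = [] := by
        cases β₁ with
        | nil => rfl
        | cons b β => simp at h₁; simp [h₁.1] at hβ₁
      have hb2 : β₂ = [] := by
        cases β₂ with
        | nil => rfl
        | cons b β => simp at h₂; simp [h₂.1] at hβ₂
      subst hb1; subst hb2
      simp only [List.nil_append] at h₁ h₂
      cases Ns₁ with
      | nil => simp [J] at h₁
      | cons n₁ N₁ =>
        cases Ns₂ with
        | nil => simp [J] at h₂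
        | cons n₂ N₂ =>
          simp only [J_cons, List.cons_append] at h₁ h₂
          have e₁ : Z = n₁ ++ J N₁ := by injection h₁
          have e₂ : Z = n₂ ++ J N₂ := by injection h₂
          obtain ⟨hn, hN⟩ := ih n₁ N₁ n₂ N₂ e₁ e₂ (hN₁ n₁ (by simp)) (hN₂ n₂ (by simp))
            (fun n hn => hN₁ n (by simp [hn])) (fun n hn => hN₂ n (by simp [hn]))
          exact ⟨rfl, by rw [hn, hN]⟩
    · have hb1 : ∃ β, β₁ = c :: β := by
        cases β₁ with
        | nil =>
          simp only [List.nil_append] at h₁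
          cases Ns₁ with
          | nil => simp [J] at h₁
          | cons n N => simp [J] at h₁; exact absurd h₁.1 (fun h => hc h)
        | cons b β => simp at h₁; exact ⟨β, by rw [h₁.1]⟩
      have hb2 : ∃ β, β₂ = c :: β := by
        cases β₂ with
        | nil =>
          simp only [List.nil_append] at h₂
          cases Ns₂ with
          | nil => simp [J] at h₂
          | cons n N => simp [J] at h₂; exact absurd h₂.1 (fun h => hc h)
        | cons b β => simp at h₂; exact ⟨β, by rw [h₂.1]⟩
      obtain ⟨β₁', rfl⟩ := hb1
      obtain ⟨β₂', rfl⟩ := hb2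
      simp only [List.cons_append, List.cons.injEq] at h₁ h₂
      obtain ⟨h', hN⟩ := ih β₁' Ns₁ β₂' Ns₂ h₁.2 h₂.2
        (fun h => hβ₁ (List.mem_cons_of_mem _ h)) (fun h => hβ₂ (List.mem_cons_of_mem _ h)) hN₁ hN₂
      exact ⟨by rw [h'], hN⟩

lemma J_split : ∀ (L : List (List Λ)) (U T : List Λ), J L = U ++ T →
    (∃ L₁ L₂, L = L₁ ++ L₂ ∧ U = J L₁ ∧ T = J L₂) ∨
    (∃ L₁ u₁ u₂ L₂, L = L₁ ++ (u₁ ++ u₂) :: L₂ ∧ U = J L₁ ++ 2 :: u₁ ∧ T = u₂ ++ J L₂) := by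
  intro L
  induction L with
  | nil =>
    intro U T h
    have h' : U ++ T = [] := h.symm
    rw [List.append_eq_nil_iff] at h'
    left; exact ⟨[], [], rfl, h'.1, h'.2⟩
  | cons u L ih =>
    intro U T h
    cases U with
    | nil => left; exact ⟨[], u :: L, rfl, rfl, by simpa using h.symm⟩
    | cons c U' =>
      simp only [J_cons, List.cons_append, List.cons.injEq] at h
      obtain ⟨hc, h'⟩ := h
      rcases List.append_eq_append_iff.1 h' with ⟨a', ha1, ha2⟩ | ⟨a', ha1, ha2⟩
      · -- U' = u ++ a', J L = a' ++ T
        rcases ih a' T ha2 with ⟨L₁, L₂, rfl, rfl, rfl⟩ | ⟨L₁, u₁, u₂, L₂, rfl, rfl, rfl⟩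
        · left; exact ⟨u :: L₁, L₂, rfl, by simp [hc, ha1], rfl⟩
        · right; exact ⟨u :: L₁, u₁, u₂, L₂, rfl, by simp [hc, ha1], rfl⟩
      · -- u = U' ++ a', T = a' ++ J L
        right
        exact ⟨[], U', a', L, by simp [ha1], by simp [hc], by simp [ha2]⟩

lemma concat_inj' {α : Type*} {A B : List α} {x y : α} (h : A ++ [x] = B ++ [y]) :
    A = B ∧ x = y :=
  List.concat_inj.1 (by simpa [List.concat_eq_append] using h)

lemma seg_core {X u₂ : List Λ} {M' : List (List Λ)} (hX : X ≠ []) (hM' : M' ≠ [])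
    (h : X ++ X = u₂ ++ J M') (hu₂ : (2:Λ) ∉ u₂) (hM2 : ∀ n ∈ M', (2:Λ) ∉ n) :
    ∃ (Nd : List (List Λ)) (nk β : List Λ), u₂ = β ∧
      M' = (Nd ++ [nk ++ β] ++ Nd) ++ [nk] ∧ X = β ++ J (Nd ++ [nk]) := by
  obtain ⟨β, Ns, hXd, hβ, hNs⟩ := blockdec X
  have hNs_ne : Ns ≠ [] := by
    rintro rfl
    simp only [J_nil, List.append_nil] at hXd
    subst hXd
    have h2 : (2:Λ) ∈ X ++ X := by
      rw [h]
      rcases M' with _ | ⟨m, M''⟩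
      · exact absurd rfl hM'
      · simp
    rcases List.mem_append.1 h2 with h2 | h2 <;> exact hβ h2
  obtain ⟨Nd, nk, hNk⟩ : ∃ Nd nk, Ns = Nd ++ [nk] := by
    rcases List.eq_nil_or_concat Ns with h' | ⟨Nd', nk', h'⟩
    · exact absurd h' hNs_ne
    · exact ⟨Nd', nk', by simpa [List.concat_eq_append] using h'⟩
  subst hNk
  have key : X ++ X = β ++ J ((Nd ++ [nk ++ β] ++ Nd) ++ [nk]) := by
    rw [hXd]; simp [List.append_assoc]
  have hblocks : ∀ z ∈ (Nd ++ [nk ++ β] ++ Nd) ++ [nk], (2:Λ) ∉ z := by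
    intro z hz
    simp only [List.mem_append, List.mem_singleton] at hz
    rcases hz with ((hz | hz) | hz) | hz
    · exact hNs z (by simp [hz])
    · rw [hz]
      intro hmem
      rcases List.mem_append.1 hmem with hm | hm
      · exact hNs nk (by simp) hm
      · exact hβ hm
    · exact hNs z (by simp [hz])
    · rw [hz]; exact hNs nk (by simp)
  obtain ⟨h1, h2⟩ := dec_unique (X ++ X) u₂ M' β ((Nd ++ [nk ++ β] ++ Nd) ++ [nk])
    h key hu₂ hβ hM2 hblocks
  exact ⟨Nd, nk, β, h1, h2, hXd⟩

lemma seg (L : List (List Λ)) (hL : ∀ u ∈ L, (2:Λ) ∉ u) {U X T : List Λ} (hX : X ≠ [])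
    (h : J L = U ++ (X ++ X) ++ T) :
    (∃ L₁ u₁ u₂ L₂, L = L₁ ++ (u₁ ++ (X ++ X) ++ u₂) :: L₂ ∧
        U = J L₁ ++ 2 :: u₁ ∧ T = u₂ ++ J L₂ ∧
        U ++ X ++ T = J (L₁ ++ (u₁ ++ X ++ u₂) :: L₂)) ∨
    (∃ (pre Nd : List (List Λ)) (nk α w₂ : List Λ) (L₂ : List (List Λ)),
        L = pre ++ (Nd ++ [nk ++ α]) ++ Nd ++ (nk ++ w₂) :: L₂ ∧
        U ++ X ++ T = J (pre ++ Nd ++ (nk ++ w₂) :: L₂) ∧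
        ((pre = [] ∧ α = []) ∨ ∃ pre' upre, pre = pre' ++ [upre ++ α])) := by
  rw [List.append_assoc] at h
  rcases J_split L U _ h with ⟨L₁, L₂, hLeq, hU, hE⟩ | ⟨L₁, u₁, u₂, L₂, hLeq, hU, hE⟩
  · -- U = J L₁, (X++X) ++ T = J L₂
    rcases J_split L₂ (X ++ X) T hE.symm with ⟨M, L₂', hL₂, hP, hT⟩ |
      ⟨M, w₁, w₂, L₂', hL₂, hP, hT⟩
    · -- X ++ X = J M, T = J L₂'
      have hM' : M ≠ [] := by
        rintro rfl
        simp only [J_nil] at hP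
        exact hX (List.append_eq_nil_iff.1 hP).1
      have hM2 : ∀ n ∈ M, (2:Λ) ∉ n := by
        intro n hn; exact hL n (by rw [hLeq, hL₂]; simp [hn])
      obtain ⟨Nd, nk, β, hβnil, hMeq, hXeq⟩ :=
        seg_core (u₂ := []) (M' := M) hX hM' (h := by simpa using hP) (hu₂ := by simp) (hM2 := hM2)
      obtain rfl : β = [] := hβnil.symm
      right
      refine ⟨L₁, Nd, nk, [], [], L₂', ?_, ?_, ?_⟩
      · rw [hLeq, hL₂, hMeq]; simp [List.append_assoc]
      · rw [hU, hT, hXeq]; simp [List.append_assoc]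
      · rcases List.eq_nil_or_concat L₁ with h' | ⟨pre', ulast, h'⟩
        · exact Or.inl ⟨h', hβnil.symm⟩
        · exact Or.inr ⟨pre', ulast, by
            rw [h', List.concat_eq_append, ← hβnil, List.append_nil]⟩
    · -- X ++ X = J M ++ 2 :: w₁, T = w₂ ++ J L₂', L₂ = M ++ (w₁ ++ w₂) :: L₂'
      have hP' : X ++ X = [] ++ J (M ++ [w₁]) := by simp [hP]
      have hM2 : ∀ n ∈ M ++ [w₁], (2:Λ) ∉ n := by
        intro n hn
        rcases List.mem_append.1 hn with hn | hn
        · exact hL n (by rw [hLeq, hL₂]; simp [hn])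
        · have : (2:Λ) ∉ w₁ ++ w₂ := hL _ (by rw [hLeq, hL₂]; simp)
          simp only [List.mem_singleton] at hn
          subst hn
          exact fun hm => this (List.mem_append.2 (Or.inl hm))
      obtain ⟨Nd, nk, β, hβnil, hMeq, hXeq⟩ :=
        seg_core (u₂ := []) (M' := M ++ [w₁]) hX (by simp) (h := by simpa using hP') (hu₂ := by simp) (hM2 := hM2)
      obtain rfl : β = [] := hβnil.symm
      obtain ⟨hMe, hw₁⟩ := concat_inj' hMeq
      right
      refine ⟨L₁, Nd, nk, [], w₂, L₂', ?_, ?_, ?_⟩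
      · rw [hLeq, hL₂, hMe, hw₁]; simp [List.append_assoc]
      · rw [hU, hT, hXeq]; simp [List.append_assoc]
      · rcases List.eq_nil_or_concat L₁ with h' | ⟨pre', ulast, h'⟩
        · exact Or.inl ⟨h', hβnil.symm⟩
        · exact Or.inr ⟨pre', ulast, by
            rw [h', List.concat_eq_append, ← hβnil, List.append_nil]⟩
  · -- U = J L₁ ++ 2 :: u₁, (X++X) ++ T = u₂ ++ J L₂, segment u₁ ++ u₂
    have hseg2 : (2:Λ) ∉ u₁ ++ u₂ := hL _ (by rw [hLeq]; simp)
    rcases List.append_eq_append_iff.1 hE with ⟨a', ha1, ha2⟩ | ⟨Pp, hp1, hp2⟩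
    · -- u₂ = (X++X) ++ a', T = a' ++ J L₂   (k0)
      left
      refine ⟨L₁, u₁, a', L₂, ?_, hU, ha2, ?_⟩
      · rw [hLeq, ha1]; simp [List.append_assoc]
      · rw [hU, ha2]; simp [List.append_assoc]
    · -- X ++ X = u₂ ++ Pp, J L₂ = Pp ++ T
      have hu₂ : (2:Λ) ∉ u₂ := fun hm => hseg2 (List.mem_append.2 (Or.inr hm))
      rcases J_split L₂ Pp T hp2 with ⟨M, L₂', hL₂, hP, hT⟩ |
        ⟨M, w₁, w₂, L₂', hL₂, hP, hT⟩
      · -- Pp = J M, T = J L₂'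
        cases M with
        | nil =>
          -- X ++ X = u₂, boundary k0 with u₂' = []
          left
          have hxx : u₂ = X ++ X := by rw [hP] at hp1; simpa using hp1.symm
          refine ⟨L₁, u₁, [], L₂', ?_, hU, by simp [hT, hL₂], ?_⟩
          · rw [hLeq, hL₂, hxx]; simp [List.append_assoc]
          · rw [hU, hT]; simp [List.append_assoc]
        | cons m M'' =>
          have hM2 : ∀ n ∈ m :: M'', (2:Λ) ∉ n := by
            intro n hn
            apply hL
            rw [hLeq, hL₂]
            simp only [List.mem_append, List.mem_cons] at hn ⊢
            tauto
          obtain ⟨Nd, nk, β, hβ, hMeq, hXeq⟩ :=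
            seg_core hX (by simp) (by rw [hp1, hP]) hu₂ hM2
          right
          refine ⟨L₁ ++ [u₁ ++ β], Nd, nk, β, [], L₂', ?_, ?_, ?_⟩
          · rw [hLeq, hL₂, hMeq, hβ]; simp [List.append_assoc]
          · rw [hU, hT, hXeq]; simp [List.append_assoc]
          · exact Or.inr ⟨L₁, u₁, rfl⟩
      · -- Pp = J M ++ 2 :: w₁, T = w₂ ++ J L₂', L₂ = M ++ (w₁ ++ w₂) :: L₂'
        have hP' : X ++ X = u₂ ++ J (M ++ [w₁]) := by rw [hp1, hP]; simp
        have hM2 : ∀ n ∈ M ++ [w₁], (2:Λ) ∉ n := by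
          intro n hn
          rcases List.mem_append.1 hn with hn | hn
          · exact hL n (by rw [hLeq, hL₂]; simp [hn])
          · have : (2:Λ) ∉ w₁ ++ w₂ := hL _ (by rw [hLeq, hL₂]; simp)
            simp only [List.mem_singleton] at hn
            subst hn
            exact fun hm => this (List.mem_append.2 (Or.inl hm))
        obtain ⟨Nd, nk, β, hβ, hMeq, hXeq⟩ := seg_core hX (by simp) hP' hu₂ hM2
        obtain ⟨hMe, hw₁⟩ := concat_inj' hMeq
        right
        refine ⟨L₁ ++ [u₁ ++ β], Nd, nk, β, w₂, L₂', ?_, ?_, ?_⟩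
        · rw [hLeq, hL₂, hMe, hw₁, hβ]; simp [List.append_assoc]
        · rw [hU, hT, hXeq]; simp [List.append_assoc]
        · exact Or.inr ⟨L₁, u₁, rfl⟩

inductive Conn | f | f1 | q | p
deriving DecidableEq

def aba : List Λ := [0,1,0]
def abab : List Λ := [0,1,0,1]
def ab : List Λ := [0,1]

def connSegs : Conn → List (List Λ)
  | .f => [aba, abab]
  | .f1 => [abab]
  | .q => [aba, ab]
  | .p => [ab]

def Wl (Winf : ℕ → Fin 4) (l : ℕ → ℕ) (j : ℕ) : List Λ := (List.range (l j)).map Winf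

def segsOf (Winf : ℕ → Fin 4) (l : ℕ → ℕ) : List (Conn × ℕ) → List (List Λ)
  | [] => []
  | (c, j) :: σ => connSegs c ++ Wl Winf l j :: segsOf Winf l σ

def render (Winf : ℕ → Fin 4) (l : ℕ → ℕ) (σ : List (Conn × ℕ)) : List Λ :=
  J (segsOf Winf l σ)

variable {Winf : ℕ → Fin 4} {l : ℕ → ℕ}

@[simp] lemma segsOf_nil : segsOf Winf l [] = [] := rfl
@[simp] lemma segsOf_cons (c : Conn) (j : ℕ) (σ) :
    segsOf Winf l ((c, j) :: σ) = connSegs c ++ Wl Winf l j :: segsOf Winf l σ := rfl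

@[simp] lemma segsOf_append (σ₁ σ₂ : List (Conn × ℕ)) :
    segsOf Winf l (σ₁ ++ σ₂) = segsOf Winf l σ₁ ++ segsOf Winf l σ₂ := by
  induction σ₁ with
  | nil => simp
  | cons cj σ ih => obtain ⟨c, j⟩ := cj; simp [ih]

lemma segsOf_ne_nil {σ : List (Conn × ℕ)} (h : σ ≠ []) : segsOf Winf l σ ≠ [] := by
  rcases σ with _ | ⟨⟨c, j⟩, σ'⟩
  · exact absurd rfl h
  · cases c <;> simp [connSegs]

lemma Wl_cons (hstart : Winf 0 = 3) {j : ℕ} (hpos : 0 < l j) :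
    ∃ t, Wl Winf l j = 3 :: t := by
  obtain ⟨m, hm⟩ : ∃ m, l j = m + 1 := ⟨l j - 1, by omega⟩
  refine ⟨(List.range m).map (fun n => Winf (n + 1)), ?_⟩
  rw [Wl, hm, List.range_succ_eq_map]
  simp [hstart, Function.comp]

lemma Wl_last (hend : ∀ i, Winf (l i - 1) = 3) {j : ℕ} (hpos : 0 < l j) :
    (Wl Winf l j).getLast? = some 3 := by
  obtain ⟨m, hm⟩ : ∃ m, l j = m + 1 := ⟨l j - 1, by omega⟩
  rw [Wl, hm, List.range_succ, List.map_append, List.getLast?_append]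
  have : Winf m = 3 := by have := hend j; rwa [hm, Nat.add_sub_cancel] at this
  simp [this]

lemma Wl_two_free (halpha : ∀ n, Winf n ≠ 2) (j : ℕ) : (2:Λ) ∉ Wl Winf l j := by
  simp only [Wl, List.mem_map]
  rintro ⟨n, -, hn⟩
  exact halpha n hn

lemma Wl_prefix (hmono : StrictMono l) {j j' : ℕ} (h : j < j') :
    ∃ ρ, Wl Winf l j' = Wl Winf l j ++ ρ := by
  have hle : l j ≤ l j' := (hmono h).le
  have htake : (List.range (l j')).take (l j) = List.range (l j) := by
    rw [List.take_range, min_eq_left hle]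
  refine ⟨((List.range (l j')).drop (l j)).map Winf, ?_⟩
  rw [Wl, Wl, ← List.map_append, ← htake, List.take_append_drop]

lemma Wl_length (hmono : StrictMono l) {j j' : ℕ} (h : j < j') :
    (Wl Winf l j).length < (Wl Winf l j').length := by
  simp only [Wl, List.length_map, List.length_range]
  exact hmono h

lemma connSegs_mem {c : Conn} {s : List Λ} (h : s ∈ connSegs c) :
    s = aba ∨ s = abab ∨ s = ab := by
  cases c <;> simp [connSegs] at h <;> tauto

lemma segs_mem : ∀ (σ : List (Conn × ℕ)) s, s ∈ segsOf Winf l σ →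
    s = aba ∨ s = abab ∨ s = ab ∨ ∃ p ∈ σ, s = Wl Winf l p.2 := by
  intro σ
  induction σ with
  | nil => simp
  | cons cj σ' ih =>
    obtain ⟨c, j⟩ := cj
    intro s hs
    simp only [segsOf_cons, List.mem_append, List.mem_cons] at hs
    rcases hs with hs | hs | hs
    · have := connSegs_mem hs; tauto
    · exact Or.inr (Or.inr (Or.inr ⟨(c, j), by simp, hs⟩))
    · rcases ih s hs with h | h | h | ⟨p, hp, hps⟩
      · exact Or.inl h
      · exact Or.inr (Or.inl h)
      · exact Or.inr (Or.inr (Or.inl h))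
      · exact Or.inr (Or.inr (Or.inr ⟨p, by simp [hp], hps⟩))

lemma segs_two_free (halpha : ∀ n, Winf n ≠ 2) (σ : List (Conn × ℕ)) :
    ∀ s ∈ segsOf Winf l σ, (2:Λ) ∉ s := by
  intro s hs
  rcases segs_mem σ s hs with h | h | h | ⟨p, -, h⟩ <;> subst h
  · decide
  · decide
  · decide
  · exact Wl_two_free halpha _

lemma segs_last : ∀ (σ : List (Conn × ℕ)), σ ≠ [] →
    ∃ p ∈ σ, (segsOf Winf l σ).getLast? = some (Wl Winf l p.2) := by
  intro σ
  induction σ with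
  | nil => intro h; exact absurd rfl h
  | cons cj σ' ih =>
    obtain ⟨c, j⟩ := cj
    intro _
    rcases eq_or_ne σ' [] with rfl | hσ'
    · refine ⟨(c, j), by simp, ?_⟩
      have : segsOf Winf l [(c, j)] = (connSegs c ++ [Wl Winf l j]) := by simp
      rw [this, List.getLast?_append]
      simp
    · obtain ⟨p, hp, hlast⟩ := ih hσ'
      refine ⟨p, by simp [hp], ?_⟩
      have hrw : segsOf Winf l ((c, j) :: σ') =
          (connSegs c ++ [Wl Winf l j]) ++ segsOf Winf l σ' := by simp
      rw [hrw, List.getLast?_append, hlast]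
      rfl

def RunConc (Winf : ℕ → Fin 4) (l : ℕ → ℕ) (σ : List (Conn × ℕ)) (A : List (List Λ))
    (s : List Λ) (B : List (List Λ)) : Prop :=
  ∃ σ₁ c j σ₂, σ = σ₁ ++ (c, j) :: σ₂ ∧
    ((c = Conn.f ∧ A = segsOf Winf l σ₁ ∧ s = aba ∧
        B = abab :: Wl Winf l j :: segsOf Winf l σ₂) ∨
     (c = Conn.f ∧ A = segsOf Winf l σ₁ ++ [aba] ∧ s = abab ∧
        B = Wl Winf l j :: segsOf Winf l σ₂) ∨
     (c = Conn.q ∧ A = segsOf Winf l σ₁ ∧ s = aba ∧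
        B = ab :: Wl Winf l j :: segsOf Winf l σ₂) ∨
     (c = Conn.q ∧ A = segsOf Winf l σ₁ ++ [aba] ∧ s = ab ∧
        B = Wl Winf l j :: segsOf Winf l σ₂) ∨
     (c = Conn.f1 ∧ A = segsOf Winf l σ₁ ∧ s = abab ∧
        B = Wl Winf l j :: segsOf Winf l σ₂) ∨
     (c = Conn.p ∧ A = segsOf Winf l σ₁ ∧ s = ab ∧
        B = Wl Winf l j :: segsOf Winf l σ₂) ∨
     (A = segsOf Winf l σ₁ ++ connSegs c ∧ s = Wl Winf l j ∧ B = segsOf Winf l σ₂))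

lemma run_ext {σ' : List (Conn × ℕ)} {A : List (List Λ)} {s : List Λ} {B : List (List Λ)}
    (c : Conn) (j : ℕ) (h : RunConc Winf l σ' A s B) :
    RunConc Winf l ((c, j) :: σ') (connSegs c ++ Wl Winf l j :: A) s B := by
  obtain ⟨σ₁, c', j', σ₂, rfl, hcase⟩ := h
  refine ⟨(c, j) :: σ₁, c', j', σ₂, rfl, ?_⟩
  rcases hcase with ⟨h1, h2, h3, h4⟩ | ⟨h1, h2, h3, h4⟩ | ⟨h1, h2, h3, h4⟩ |
    ⟨h1, h2, h3, h4⟩ | ⟨h1, h2, h3, h4⟩ | ⟨h1, h2, h3, h4⟩ | ⟨h2, h3, h4⟩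
  · exact Or.inl ⟨h1, by simp [h2], h3, h4⟩
  · exact Or.inr (Or.inl ⟨h1, by simp [h2], h3, h4⟩)
  · exact Or.inr (Or.inr (Or.inl ⟨h1, by simp [h2], h3, h4⟩))
  · exact Or.inr (Or.inr (Or.inr (Or.inl ⟨h1, by simp [h2], h3, h4⟩)))
  · exact Or.inr (Or.inr (Or.inr (Or.inr (Or.inl ⟨h1, by simp [h2], h3, h4⟩))))
  · exact Or.inr (Or.inr (Or.inr (Or.inr (Or.inr (Or.inl ⟨h1, by simp [h2], h3, h4⟩)))))
  · exact Or.inr (Or.inr (Or.inr (Or.inr (Or.inr (Or.inr ⟨by simp [h2], h3, h4⟩)))))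

lemma run : ∀ (σ : List (Conn × ℕ)) (A : List (List Λ)) (s : List Λ) (B : List (List Λ)),
    segsOf Winf l σ = A ++ s :: B → RunConc Winf l σ A s B := by
  intro σ
  induction σ with
  | nil =>
    intro A s B h
    simp only [segsOf_nil] at h
    exact absurd h.symm (by simp)
  | cons cj σ' ih =>
    obtain ⟨c, j⟩ := cj
    intro A s B h
    cases c
    case f =>
      simp only [segsOf_cons, connSegs, List.cons_append, List.nil_append] at h
      rcases A with _ | ⟨a1, A⟩
      · rw [List.nil_append] at h
        injection h with h1 h2
        exact ⟨[], .f, j, σ', rfl, Or.inl ⟨rfl, by simp, h1.symm, h2.symm⟩⟩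
      rw [List.cons_append] at h
      injection h with e1 h
      rcases A with _ | ⟨a2, A⟩
      · rw [List.nil_append] at h
        injection h with h1 h2
        exact ⟨[], .f, j, σ', rfl, Or.inr (Or.inl ⟨rfl, by simp [← e1], h1.symm, h2.symm⟩)⟩
      rw [List.cons_append] at h
      injection h with e2 h
      rcases A with _ | ⟨a3, A⟩
      · rw [List.nil_append] at h
        injection h with h1 h2
        refine ⟨[], .f, j, σ', rfl, Or.inr (Or.inr (Or.inr (Or.inr (Or.inr (Or.inr
          ⟨by simp [connSegs, ← e1, ← e2], h1.symm, h2.symm⟩)))))⟩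
      rw [List.cons_append] at h
      injection h with e3 h
      have hrec := run_ext (c := .f) j (ih A s B h)
      rw [← e1, ← e2, ← e3]
      simpa [connSegs] using hrec
    case q =>
      simp only [segsOf_cons, connSegs, List.cons_append, List.nil_append] at h
      rcases A with _ | ⟨a1, A⟩
      · rw [List.nil_append] at h
        injection h with h1 h2
        exact ⟨[], .q, j, σ', rfl, Or.inr (Or.inr (Or.inl ⟨rfl, by simp, h1.symm, h2.symm⟩))⟩
      rw [List.cons_append] at h
      injection h with e1 h
      rcases A with _ | ⟨a2, A⟩
      · rw [List.nil_append] at h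
        injection h with h1 h2
        exact ⟨[], .q, j, σ', rfl,
          Or.inr (Or.inr (Or.inr (Or.inl ⟨rfl, by simp [← e1], h1.symm, h2.symm⟩)))⟩
      rw [List.cons_append] at h
      injection h with e2 h
      rcases A with _ | ⟨a3, A⟩
      · rw [List.nil_append] at h
        injection h with h1 h2
        refine ⟨[], .q, j, σ', rfl, Or.inr (Or.inr (Or.inr (Or.inr (Or.inr (Or.inr
          ⟨by simp [connSegs, ← e1, ← e2], h1.symm, h2.symm⟩)))))⟩
      rw [List.cons_append] at h
      injection h with e3 h
      have hrec := run_ext (c := .q) j (ih A s B h)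
      rw [← e1, ← e2, ← e3]
      simpa [connSegs] using hrec
    case f1 =>
      simp only [segsOf_cons, connSegs, List.cons_append, List.nil_append] at h
      rcases A with _ | ⟨a1, A⟩
      · rw [List.nil_append] at h
        injection h with h1 h2
        exact ⟨[], .f1, j, σ', rfl,
          Or.inr (Or.inr (Or.inr (Or.inr (Or.inl ⟨rfl, by simp, h1.symm, h2.symm⟩))))⟩
      rw [List.cons_append] at h
      injection h with e1 h
      rcases A with _ | ⟨a2, A⟩
      · rw [List.nil_append] at h
        injection h with h1 h2
        refine ⟨[], .f1, j, σ', rfl, Or.inr (Or.inr (Or.inr (Or.inr (Or.inr (Or.inr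
          ⟨by simp [connSegs, ← e1], h1.symm, h2.symm⟩)))))⟩
      rw [List.cons_append] at h
      injection h with e2 h
      have hrec := run_ext (c := .f1) j (ih A s B h)
      rw [← e1, ← e2]
      simpa [connSegs] using hrec
    case p =>
      simp only [segsOf_cons, connSegs, List.cons_append, List.nil_append] at h
      rcases A with _ | ⟨a1, A⟩
      · rw [List.nil_append] at h
        injection h with h1 h2
        exact ⟨[], .p, j, σ', rfl,
          Or.inr (Or.inr (Or.inr (Or.inr (Or.inr (Or.inl ⟨rfl, by simp, h1.symm, h2.symm⟩)))))⟩
      rw [List.cons_append] at h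
      injection h with e1 h
      rcases A with _ | ⟨a2, A⟩
      · rw [List.nil_append] at h
        injection h with h1 h2
        refine ⟨[], .p, j, σ', rfl, Or.inr (Or.inr (Or.inr (Or.inr (Or.inr (Or.inr
          ⟨by simp [connSegs, ← e1], h1.symm, h2.symm⟩)))))⟩
      rw [List.cons_append] at h
      injection h with e2 h
      have hrec := run_ext (c := .p) j (ih A s B h)
      rw [← e1, ← e2]
      simpa [connSegs] using hrec

lemma gl {β : Type*} {t : List β} {α : List β} (h : α ≠ []) : (t ++ α).getLast? = α.getLast? := by
  rw [List.getLast?_append]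
  rcases List.eq_nil_or_concat α with rfl | ⟨α', x, rfl⟩
  · exact absurd rfl h
  · simp

lemma no_sq_ab {u₁ X u₂ : List Λ} (hX : X ≠ []) (h : ab = u₁ ++ (X ++ X) ++ u₂) : False := by
  rcases X with _ | ⟨x, X'⟩
  · exact hX rfl
  have hlen := congrArg List.length h
  simp [ab] at hlen
  have hu₁ : u₁ = [] := List.eq_nil_of_length_eq_zero (by omega)
  have hX' : X' = [] := List.eq_nil_of_length_eq_zero (by omega)
  have hu₂ : u₂ = [] := List.eq_nil_of_length_eq_zero (by omega)
  subst hu₁; subst hX'; subst hu₂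
  simp only [ab, List.nil_append, List.append_nil, List.cons_append, List.cons.injEq] at h
  obtain ⟨h1, h2, -⟩ := h
  rw [← h1] at h2
  exact absurd h2 (by decide)

lemma no_sq_aba {u₁ X u₂ : List Λ} (hX : X ≠ []) (h : aba = u₁ ++ (X ++ X) ++ u₂) : False := by
  rcases X with _ | ⟨x, X'⟩
  · exact hX rfl
  have hlen := congrArg List.length h
  simp [aba] at hlen
  have hX' : X' = [] := List.eq_nil_of_length_eq_zero (by omega)
  subst hX'
  rcases u₁ with _ | ⟨a, u₁⟩
  · simp only [aba, List.nil_append, List.cons_append, List.cons.injEq] at h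
    obtain ⟨h1, h2, -⟩ := h
    rw [← h1] at h2
    exact absurd h2 (by decide)
  · have hu₁ : u₁ = [] := List.eq_nil_of_length_eq_zero (by simp at hlen; omega)
    subst hu₁
    simp only [aba, List.cons_append, List.nil_append, List.cons.injEq] at h
    obtain ⟨-, h1, h2, -⟩ := h
    rw [← h1] at h2
    exact absurd h2 (by decide)

lemma sq_abab {u₁ X u₂ : List Λ} (hX : X ≠ []) (h : abab = u₁ ++ (X ++ X) ++ u₂) :
    u₁ = [] ∧ X = ab ∧ u₂ = [] := by
  rcases X with _ | ⟨x, X'⟩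
  · exact absurd rfl hX
  have hlen := congrArg List.length h
  simp [abab] at hlen
  rcases X' with _ | ⟨y, X''⟩
  · -- |X| = 1 : impossible
    exfalso
    rcases u₁ with _ | ⟨a, u₁⟩
    · simp only [abab, List.nil_append, List.cons_append, List.cons.injEq] at h
      obtain ⟨h1, h2, -⟩ := h
      rw [← h1] at h2; exact absurd h2 (by decide)
    rcases u₁ with _ | ⟨b, u₁⟩
    · simp only [abab, List.cons_append, List.nil_append, List.cons.injEq] at h
      obtain ⟨-, h1, h2, -⟩ := h
      rw [← h1] at h2; exact absurd h2 (by decide)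
    · have hu₁ : u₁ = [] := List.eq_nil_of_length_eq_zero (by simp at hlen; omega)
      subst hu₁
      simp only [abab, List.cons_append, List.nil_append, List.cons.injEq] at h
      obtain ⟨-, -, h1, h2, -⟩ := h
      rw [← h1] at h2; exact absurd h2 (by decide)
  · simp at hlen
    have hX'' : X'' = [] := List.eq_nil_of_length_eq_zero (by omega)
    subst hX''
    simp at hlen
    have hu₁ : u₁ = [] := List.eq_nil_of_length_eq_zero (by omega)
    have hu₂ : u₂ = [] := List.eq_nil_of_length_eq_zero (by omega)
    subst hu₁; subst hu₂
    simp only [abab, List.nil_append, List.append_nil, List.cons_append, List.cons.injEq] at h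
    obtain ⟨h1, h2, -⟩ := h
    refine ⟨rfl, ?_, rfl⟩
    simp [ab, ← h1, ← h2]

lemma Wl_ne_small (hstart : Winf 0 = 3) (hpos : ∀ i, 0 < l i) {j : ℕ} {s : List Λ}
    (hs : s = aba ∨ s = abab ∨ s = ab) : Wl Winf l j ≠ s := by
  obtain ⟨t, ht⟩ := Wl_cons hstart (hpos j)
  rcases hs with rfl | rfl | rfl <;> rw [ht] <;> intro hh <;>
    · injection hh with h1 _
      exact absurd h1 (by decide)

lemma wl_notin (hstart : Winf 0 = 3) (hpos : ∀ i, 0 < l i) (hmono : StrictMono l)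
    {j : ℕ} {σ₂ : List (Conn × ℕ)} (hj : ∀ b ∈ σ₂, j < b.2)
    (hmem : Wl Winf l j ∈ segsOf Winf l σ₂) : False := by
  rcases segs_mem σ₂ _ hmem with h | h | h | ⟨p, hp, hps⟩
  · exact Wl_ne_small hstart hpos (Or.inl rfl) h
  · exact Wl_ne_small hstart hpos (Or.inr (Or.inl rfl)) h
  · exact Wl_ne_small hstart hpos (Or.inr (Or.inr rfl)) h
  · have := Wl_length (Winf := Winf) hmono (hj p hp)
    rw [← hps] at this
    exact lt_irrefl _ this

lemma pw_tail {σ σ₁ σ₂ : List (Conn × ℕ)} {c : Conn} {j : ℕ}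
    (hpw : List.Pairwise (fun a b : Conn × ℕ => a.2 < b.2) σ)
    (hσ : σ = σ₁ ++ (c, j) :: σ₂) : ∀ b ∈ σ₂, j < b.2 := by
  subst hσ
  have h2 := (List.pairwise_append.1 hpw).2.1
  exact (List.pairwise_cons.1 h2).1

def SufPair (c d : Conn) : Prop :=
  (c = Conn.f ∧ d = Conn.f) ∨ (c = Conn.f ∧ d = Conn.f1) ∨ (c = Conn.f1 ∧ d = Conn.f1) ∨
  (c = Conn.q ∧ d = Conn.q) ∨ (c = Conn.q ∧ d = Conn.p) ∨ (c = Conn.p ∧ d = Conn.p)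

def MoveConc (Winf : ℕ → Fin 4) (l : ℕ → ℕ) (σ : List (Conn × ℕ)) (V' : List Λ) : Prop :=
  (∃ σ₁ j σ₂, (σ = σ₁ ++ (Conn.f, j) :: σ₂ ∧
      (V' = render Winf l (σ₁ ++ (Conn.q, j) :: σ₂) ∨
       V' = render Winf l (σ₁ ++ (Conn.f1, j) :: σ₂))) ∨
    (σ = σ₁ ++ (Conn.f1, j) :: σ₂ ∧ V' = render Winf l (σ₁ ++ (Conn.p, j) :: σ₂))) ∨
  (∃ σ₁ c d j j' σ₂, σ = σ₁ ++ (c, j) :: (d, j') :: σ₂ ∧ SufPair c d ∧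
    V' = render Winf l (σ₁ ++ (c, j') :: σ₂))

lemma last_of_sigma (hend : ∀ i, Winf (l i - 1) = 3) (hpos : ∀ i, 0 < l i)
    {σ₁ : List (Conn × ℕ)} {pre' : List (List Λ)} {z : List Λ}
    (h : segsOf Winf l σ₁ = pre' ++ [z]) : z.getLast? = some 3 := by
  have hne : σ₁ ≠ [] := by rintro rfl; simp at h
  obtain ⟨p, hp, hlast⟩ := segs_last σ₁ hne
  rw [h, gl (by simp : ([z]:List (List Λ)) ≠ [])] at hlast
  simp only [List.getLast?_singleton, Option.some.injEq] at hlast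
  rw [hlast]
  exact Wl_last hend (hpos _)

lemma core (halpha : ∀ n, Winf n ≠ 2) (hstart : Winf 0 = 3)
    (hend : ∀ i, Winf (l i - 1) = 3) (hpos : ∀ i, 0 < l i) (hmono : StrictMono l)
    (hsf : ∀ n, ∀ Y : List Λ, Y ≠ [] → ¬ (Y ++ Y) <:+: ((List.range n).map Winf))
    (σ : List (Conn × ℕ)) (hpw : List.Pairwise (fun a b : Conn × ℕ => a.2 < b.2) σ)
    {U X T : List Λ} (hX : X ≠ []) (h : render Winf l σ = U ++ (X ++ X) ++ T) :
    MoveConc Winf l σ (U ++ X ++ T) := by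
  rcases seg (segsOf Winf l σ) (segs_two_free halpha σ) hX h with
    ⟨L₁, u₁, u₂, L₂, hLeq, hU, hT, hres⟩ | ⟨pre, Nd, nk, α, w₂, L₂, hLeq, hres, hflag⟩
  · -- square inside a single segment
    obtain ⟨σ₁, c, j, σ₂, hσ, hcase⟩ := run σ L₁ _ L₂ hLeq
    rcases hcase with ⟨hc, hA, hs, hB⟩ | ⟨hc, hA, hs, hB⟩ | ⟨hc, hA, hs, hB⟩ |
      ⟨hc, hA, hs, hB⟩ | ⟨hc, hA, hs, hB⟩ | ⟨hc, hA, hs, hB⟩ | ⟨hA, hs, hB⟩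
    · exact (no_sq_aba hX hs.symm).elim
    · obtain ⟨rfl, hXab, rfl⟩ := sq_abab hX hs.symm
      subst hc
      refine Or.inl ⟨σ₁, j, σ₂, Or.inl ⟨hσ, Or.inl ?_⟩⟩
      rw [hres, hA, hB, hXab]
      simp [render, connSegs]
    · exact (no_sq_aba hX hs.symm).elim
    · exact (no_sq_ab hX hs.symm).elim
    · obtain ⟨rfl, hXab, rfl⟩ := sq_abab hX hs.symm
      subst hc
      refine Or.inl ⟨σ₁, j, σ₂, Or.inr ⟨hσ, ?_⟩⟩
      rw [hres, hA, hB, hXab]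
      simp [render, connSegs]
    · exact (no_sq_ab hX hs.symm).elim
    · exact absurd (hsf (l j) X hX ⟨u₁, u₂, by simpa [Wl] using hs⟩) (by simp)
  · rcases Nd with _ | ⟨n₁, _ | ⟨n₂, _ | ⟨n₃, Nd'⟩⟩⟩
    · -- k = 1
      have hrun := run σ pre (nk ++ α) ((nk ++ w₂) :: L₂) (by rw [hLeq]; simp)
      obtain ⟨σ₁, c, j, σ₂, hσ, hcase⟩ := hrun
      rcases hcase with ⟨hc, hA, hs, hB⟩ | ⟨hc, hA, hs, hB⟩ | ⟨hc, hA, hs, hB⟩ |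
        ⟨hc, hA, hs, hB⟩ | ⟨hc, hA, hs, hB⟩ | ⟨hc, hA, hs, hB⟩ | ⟨hA, hs, hB⟩
      · -- f pos0 : GOOD, f → f1
        injection hB with hB1 hB2
        subst hc
        refine Or.inl ⟨σ₁, j, σ₂, Or.inl ⟨hσ, Or.inr ?_⟩⟩
        rw [hres, hA, hB1, hB2]
        simp [render, connSegs]
      · -- f pos1
        exfalso
        injection hB with hB1 hB2
        rcases nk with _ | ⟨z, nk'⟩
        · simp only [List.nil_append] at hs hB1
          rcases hflag with ⟨hpre, hα⟩ | ⟨pre', upre, hpre⟩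
          · rw [hα] at hs; exact absurd hs (by simp [abab])
          · have h2 := (concat_inj' (hpre.symm.trans hA)).2
            have hlen := congrArg List.length h2
            rw [hs] at hlen
            simp [aba, abab] at hlen
        · simp only [List.cons_append] at hs hB1
          obtain ⟨t, ht⟩ := Wl_cons hstart (hpos j)
          rw [ht] at hB1
          injection hB1 with hz _
          simp [abab] at hs
          rw [hs.1] at hz
          exact absurd hz (by decide)
      · -- q pos0
        exfalso
        injection hB with hB1 hB2
        rcases eq_or_ne α [] with rfl | hαne
        · rw [List.append_nil] at hs
          rw [hs] at hB1
          have hlen := congrArg List.length hB1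
          simp [aba, ab] at hlen
        · rcases hflag with ⟨hpre, hα⟩ | ⟨pre', upre, hpre⟩
          · exact hαne hα
          · have hps : segsOf Winf l σ₁ = pre' ++ [upre ++ α] := hA.symm.trans hpre
            have hlz := last_of_sigma hend hpos hps
            rw [gl hαne] at hlz
            have hgl : (nk ++ α).getLast? = (aba).getLast? := by rw [hs]
            rw [gl hαne] at hgl
            rw [hgl] at hlz
            exact absurd hlz (by decide)
      · -- q pos1
        exfalso
        injection hB with hB1 hB2
        rcases nk with _ | ⟨z, nk'⟩
        · simp only [List.nil_append] at hs hB1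
          rcases hflag with ⟨hpre, hα⟩ | ⟨pre', upre, hpre⟩
          · rw [hα] at hs; exact absurd hs (by simp [ab])
          · have h2 := (concat_inj' (hpre.symm.trans hA)).2
            have hgl : (upre ++ α).getLast? = (aba).getLast? := by rw [h2]
            rw [gl (by rw [hs]; simp [ab])] at hgl
            rw [hs] at hgl
            exact absurd hgl (by decide)
        · simp only [List.cons_append] at hs hB1
          obtain ⟨t, ht⟩ := Wl_cons hstart (hpos j)
          rw [ht] at hB1
          injection hB1 with hz _
          simp [ab] at hs
          rw [hs.1] at hz
          exact absurd hz (by decide)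
      · -- f1 pos0
        exfalso
        injection hB with hB1 hB2
        rcases nk with _ | ⟨z, nk'⟩
        · simp only [List.nil_append] at hs hB1
          rcases hflag with ⟨hpre, hα⟩ | ⟨pre', upre, hpre⟩
          · rw [hα] at hs; exact absurd hs (by simp [abab])
          · have hps : segsOf Winf l σ₁ = pre' ++ [upre ++ α] := hA.symm.trans hpre
            have hlz := last_of_sigma hend hpos hps
            rw [gl (by rw [hs]; simp [abab])] at hlz
            rw [hs] at hlz
            exact absurd hlz (by decide)
        · simp only [List.cons_append] at hs hB1
          obtain ⟨t, ht⟩ := Wl_cons hstart (hpos j)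
          rw [ht] at hB1
          injection hB1 with hz _
          simp [abab] at hs
          rw [hs.1] at hz
          exact absurd hz (by decide)
      · -- p pos0
        exfalso
        injection hB with hB1 hB2
        rcases nk with _ | ⟨z, nk'⟩
        · simp only [List.nil_append] at hs hB1
          rcases hflag with ⟨hpre, hα⟩ | ⟨pre', upre, hpre⟩
          · rw [hα] at hs; exact absurd hs (by simp [ab])
          · have hps : segsOf Winf l σ₁ = pre' ++ [upre ++ α] := hA.symm.trans hpre
            have hlz := last_of_sigma hend hpos hps
            rw [gl (by rw [hs]; simp [ab])] at hlz
            rw [hs] at hlz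
            exact absurd hlz (by decide)
        · simp only [List.cons_append] at hs hB1
          obtain ⟨t, ht⟩ := Wl_cons hstart (hpos j)
          rw [ht] at hB1
          injection hB1 with hz _
          simp [ab] at hs
          rw [hs.1] at hz
          exact absurd hz (by decide)
      · -- W-case for k = 1
        exfalso
        obtain ⟨t, ht⟩ := Wl_cons hstart (hpos j)
        rcases σ₂ with _ | ⟨⟨c₂, j₂⟩, σ₂'⟩
        · simp at hB
        obtain ⟨r1, B1, hss⟩ : ∃ r1 B1,
            segsOf Winf l ((c₂, j₂) :: σ₂') = ((0:Λ) :: r1) :: B1 := by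
          cases c₂ <;> exact ⟨_, _, rfl⟩
        rw [hss] at hB
        injection hB with hB1 hB2
        rcases nk with _ | ⟨z, nk'⟩
        · simp only [List.nil_append] at hs hB1
          rcases hflag with ⟨hpre, hα⟩ | ⟨pre', upre, hpre⟩
          · rw [hα, ht] at hs; exact absurd hs (by simp)
          · obtain ⟨s0, hs0, hs0l⟩ :
                ∃ s0, (connSegs c).getLast? = some s0 ∧ s0.getLast? = some (1:Λ) := by
              cases c <;> exact ⟨_, rfl, by decide⟩
            have hcomb : segsOf Winf l σ₁ ++ connSegs c = pre' ++ [upre ++ α] :=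
              hA.symm.trans hpre
            have hL : (segsOf Winf l σ₁ ++ connSegs c).getLast? = some s0 := by
              rw [gl (by cases c <;> simp [connSegs] : connSegs c ≠ [])]; exact hs0
            rw [hcomb, gl (by simp : ([upre ++ α] : List (List Λ)) ≠ []),
              List.getLast?_singleton] at hL
            have hL' : upre ++ α = s0 := by simpa using hL
            have hαne : α ≠ [] := by rw [hs, ht]; simp
            have h3 : (upre ++ α).getLast? = some 3 := by
              rw [gl hαne, hs]; exact Wl_last hend (hpos j)
            rw [hL', hs0l] at h3
            exact absurd h3 (by decide)
        · simp only [List.cons_append] at hs hB1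
          rw [ht] at hs
          injection hs with hz3 _
          injection hB1 with hz0 _
          rw [hz3] at hz0
          exact absurd hz0 (by decide)
    · -- k = 2
      have hrun := run σ pre n₁ ((nk ++ α) :: n₁ :: (nk ++ w₂) :: L₂) (by rw [hLeq]; simp)
      obtain ⟨σ₁, c, j, σ₂, hσ, hcase⟩ := hrun
      have hj2 := pw_tail hpw hσ
      rcases hcase with ⟨hc, hA, hs, hB⟩ | ⟨hc, hA, hs, hB⟩ | ⟨hc, hA, hs, hB⟩ |
        ⟨hc, hA, hs, hB⟩ | ⟨hc, hA, hs, hB⟩ | ⟨hc, hA, hs, hB⟩ | ⟨hA, hs, hB⟩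
      · -- f pos0 : n₁ = aba, but then n₁ = Wl j
        exfalso
        injection hB with hB1 hB3
        injection hB3 with hB2 hB4
        exact Wl_ne_small hstart hpos (Or.inl rfl) (hB2.symm.trans hs)
      · -- f pos1 : n₁ = abab
        injection hB with hB1 hB2
        rcases σ₂ with _ | ⟨⟨c₂, j₂⟩, σ₂'⟩
        · exact absurd hB2 (by simp)
        cases c₂
        case f =>
          exfalso
          simp only [segsOf_cons, connSegs, List.cons_append, List.nil_append] at hB2
          injection hB2 with hn _
          rw [hs] at hn
          exact absurd hn (by decide)
        case q =>
          exfalso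
          simp only [segsOf_cons, connSegs, List.cons_append, List.nil_append] at hB2
          injection hB2 with hn _
          rw [hs] at hn
          exact absurd hn (by decide)
        case p =>
          exfalso
          simp only [segsOf_cons, connSegs, List.cons_append, List.nil_append] at hB2
          injection hB2 with hn _
          rw [hs] at hn
          exact absurd hn (by decide)
        case f1 =>
          simp only [segsOf_cons, connSegs, List.cons_append, List.nil_append] at hB2
          injection hB2 with hn hB3
          injection hB3 with he1 he2
          subst hc
          refine Or.inr ⟨σ₁, .f, .f1, j, j₂, σ₂', by rw [hσ], Or.inr (Or.inl ⟨rfl, rfl⟩), ?_⟩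
          rw [hres, hA, hs, he1, he2]
          simp [render, connSegs]
      · -- q pos0
        exfalso
        injection hB with hB1 hB3
        injection hB3 with hB2 hB4
        exact Wl_ne_small hstart hpos (Or.inl rfl) (hB2.symm.trans hs)
      · -- q pos1 : n₁ = ab
        injection hB with hB1 hB2
        rcases σ₂ with _ | ⟨⟨c₂, j₂⟩, σ₂'⟩
        · exact absurd hB2 (by simp)
        cases c₂
        case f =>
          exfalso
          simp only [segsOf_cons, connSegs, List.cons_append, List.nil_append] at hB2
          injection hB2 with hn _
          rw [hs] at hn
          exact absurd hn (by decide)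
        case q =>
          exfalso
          simp only [segsOf_cons, connSegs, List.cons_append, List.nil_append] at hB2
          injection hB2 with hn _
          rw [hs] at hn
          exact absurd hn (by decide)
        case f1 =>
          exfalso
          simp only [segsOf_cons, connSegs, List.cons_append, List.nil_append] at hB2
          injection hB2 with hn _
          rw [hs] at hn
          exact absurd hn (by decide)
        case p =>
          simp only [segsOf_cons, connSegs, List.cons_append, List.nil_append] at hB2
          injection hB2 with hn hB3
          injection hB3 with he1 he2
          subst hc
          refine Or.inr ⟨σ₁, .q, .p, j, j₂, σ₂', by rw [hσ], Or.inr (Or.inr (Or.inr (Or.inr (Or.inl ⟨rfl, rfl⟩)))), ?_⟩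
          rw [hres, hA, hs, he1, he2]
          simp [render, connSegs]
      · -- f1 pos0 : n₁ = abab
        injection hB with hB1 hB2
        rcases σ₂ with _ | ⟨⟨c₂, j₂⟩, σ₂'⟩
        · exact absurd hB2 (by simp)
        cases c₂
        case f =>
          exfalso
          simp only [segsOf_cons, connSegs, List.cons_append, List.nil_append] at hB2
          injection hB2 with hn _
          rw [hs] at hn
          exact absurd hn (by decide)
        case q =>
          exfalso
          simp only [segsOf_cons, connSegs, List.cons_append, List.nil_append] at hB2
          injection hB2 with hn _
          rw [hs] at hn
          exact absurd hn (by decide)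
        case p =>
          exfalso
          simp only [segsOf_cons, connSegs, List.cons_append, List.nil_append] at hB2
          injection hB2 with hn _
          rw [hs] at hn
          exact absurd hn (by decide)
        case f1 =>
          simp only [segsOf_cons, connSegs, List.cons_append, List.nil_append] at hB2
          injection hB2 with hn hB3
          injection hB3 with he1 he2
          subst hc
          refine Or.inr ⟨σ₁, .f1, .f1, j, j₂, σ₂', by rw [hσ], Or.inr (Or.inr (Or.inl ⟨rfl, rfl⟩)), ?_⟩
          rw [hres, hA, hs, he1, he2]
          simp [render, connSegs]
      · -- p pos0 : n₁ = ab
        injection hB with hB1 hB2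
        rcases σ₂ with _ | ⟨⟨c₂, j₂⟩, σ₂'⟩
        · exact absurd hB2 (by simp)
        cases c₂
        case f =>
          exfalso
          simp only [segsOf_cons, connSegs, List.cons_append, List.nil_append] at hB2
          injection hB2 with hn _
          rw [hs] at hn
          exact absurd hn (by decide)
        case q =>
          exfalso
          simp only [segsOf_cons, connSegs, List.cons_append, List.nil_append] at hB2
          injection hB2 with hn _
          rw [hs] at hn
          exact absurd hn (by decide)
        case f1 =>
          exfalso
          simp only [segsOf_cons, connSegs, List.cons_append, List.nil_append] at hB2
          injection hB2 with hn _
          rw [hs] at hn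
          exact absurd hn (by decide)
        case p =>
          simp only [segsOf_cons, connSegs, List.cons_append, List.nil_append] at hB2
          injection hB2 with hn hB3
          injection hB3 with he1 he2
          subst hc
          refine Or.inr ⟨σ₁, .p, .p, j, j₂, σ₂', by rw [hσ], Or.inr (Or.inr (Or.inr (Or.inr (Or.inr ⟨rfl, rfl⟩)))), ?_⟩
          rw [hres, hA, hs, he1, he2]
          simp [render, connSegs]
      · -- W-case for k = 2
        exfalso
        refine wl_notin hstart hpos hmono hj2 ?_
        rw [← hB, ← hs]
        simp
    · -- k = 3
      have hrun := run σ pre n₁ (n₂ :: (nk ++ α) :: n₁ :: n₂ :: (nk ++ w₂) :: L₂)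
        (by rw [hLeq]; simp)
      obtain ⟨σ₁, c, j, σ₂, hσ, hcase⟩ := hrun
      have hj2 := pw_tail hpw hσ
      rcases hcase with ⟨hc, hA, hs, hB⟩ | ⟨hc, hA, hs, hB⟩ | ⟨hc, hA, hs, hB⟩ |
        ⟨hc, hA, hs, hB⟩ | ⟨hc, hA, hs, hB⟩ | ⟨hc, hA, hs, hB⟩ | ⟨hA, hs, hB⟩
      · -- f pos0
        injection hB with hB1 hBr
        injection hBr with hB2 hB3
        rcases σ₂ with _ | ⟨⟨c₂, j₂⟩, σ₂'⟩
        · exact absurd hB3 (by simp)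
        cases c₂
        case q =>
          exfalso
          simp only [segsOf_cons, connSegs, List.cons_append, List.nil_append] at hB3
          injection hB3 with _ hB4
          injection hB4 with hn _
          rw [hB1] at hn
          exact absurd hn (by decide)
        case f1 =>
          exfalso
          simp only [segsOf_cons, connSegs, List.cons_append, List.nil_append] at hB3
          injection hB3 with hn _
          rw [hs] at hn
          exact absurd hn (by decide)
        case p =>
          exfalso
          simp only [segsOf_cons, connSegs, List.cons_append, List.nil_append] at hB3
          injection hB3 with hn _
          rw [hs] at hn
          exact absurd hn (by decide)
        case f =>
          simp only [segsOf_cons, connSegs, List.cons_append, List.nil_append] at hB3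
          injection hB3 with _ hB4
          injection hB4 with _ hB5
          injection hB5 with he1 he2
          subst hc
          refine Or.inr ⟨σ₁, .f, .f, j, j₂, σ₂', by rw [hσ], Or.inl ⟨rfl, rfl⟩, ?_⟩
          rw [hres, hA, hs, hB1, he1, he2]
          simp [render, connSegs]
      · -- f pos1
        exfalso
        injection hB with hB1 hB2
        refine wl_notin hstart hpos hmono hj2 ?_
        rw [← hB2, ← hB1]
        simp
      · -- q pos0
        injection hB with hB1 hBr
        injection hBr with hB2 hB3
        rcases σ₂ with _ | ⟨⟨c₂, j₂⟩, σ₂'⟩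
        · exact absurd hB3 (by simp)
        cases c₂
        case f =>
          exfalso
          simp only [segsOf_cons, connSegs, List.cons_append, List.nil_append] at hB3
          injection hB3 with _ hB4
          injection hB4 with hn _
          rw [hB1] at hn
          exact absurd hn (by decide)
        case f1 =>
          exfalso
          simp only [segsOf_cons, connSegs, List.cons_append, List.nil_append] at hB3
          injection hB3 with hn _
          rw [hs] at hn
          exact absurd hn (by decide)
        case p =>
          exfalso
          simp only [segsOf_cons, connSegs, List.cons_append, List.nil_append] at hB3
          injection hB3 with hn _
          rw [hs] at hn
          exact absurd hn (by decide)
        case q =>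
          simp only [segsOf_cons, connSegs, List.cons_append, List.nil_append] at hB3
          injection hB3 with _ hB4
          injection hB4 with _ hB5
          injection hB5 with he1 he2
          subst hc
          refine Or.inr ⟨σ₁, .q, .q, j, j₂, σ₂', by rw [hσ],
            Or.inr (Or.inr (Or.inr (Or.inl ⟨rfl, rfl⟩))), ?_⟩
          rw [hres, hA, hs, hB1, he1, he2]
          simp [render, connSegs]
      · -- q pos1
        exfalso
        injection hB with hB1 hB2
        refine wl_notin hstart hpos hmono hj2 ?_
        rw [← hB2, ← hB1]
        simp
      · -- f1 pos0
        exfalso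
        injection hB with hB1 hB2
        refine wl_notin hstart hpos hmono hj2 ?_
        rw [← hB2, ← hB1]
        simp
      · -- p pos0
        exfalso
        injection hB with hB1 hB2
        refine wl_notin hstart hpos hmono hj2 ?_
        rw [← hB2, ← hB1]
        simp
      · -- W-case for k = 3
        exfalso
        refine wl_notin hstart hpos hmono hj2 ?_
        rw [← hB, ← hs]
        simp
    · -- k ≥ 4
      have hrun := run σ pre n₁ (n₂ :: n₃ :: ((Nd' ++ [nk ++ α]) ++ n₁ :: n₂ :: n₃ :: Nd'
        ++ (nk ++ w₂) :: L₂)) (by rw [hLeq]; simp)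
      obtain ⟨σ₁, c, j, σ₂, hσ, hcase⟩ := hrun
      have hj2 := pw_tail hpw hσ
      exfalso
      rcases hcase with ⟨hc, hA, hs, hB⟩ | ⟨hc, hA, hs, hB⟩ | ⟨hc, hA, hs, hB⟩ |
        ⟨hc, hA, hs, hB⟩ | ⟨hc, hA, hs, hB⟩ | ⟨hc, hA, hs, hB⟩ | ⟨hA, hs, hB⟩
      · -- f pos0 : third element n₃ = Wl j reoccurs
        injection hB with hB1 hBr
        injection hBr with hB2 hB3
        refine wl_notin hstart hpos hmono hj2 ?_
        rw [← hB3, ← hB2]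
        simp
      · injection hB with hB1 hB2
        refine wl_notin hstart hpos hmono hj2 ?_
        rw [← hB2, ← hB1]
        simp
      · injection hB with hB1 hBr
        injection hBr with hB2 hB3
        refine wl_notin hstart hpos hmono hj2 ?_
        rw [← hB3, ← hB2]
        simp
      · injection hB with hB1 hB2
        refine wl_notin hstart hpos hmono hj2 ?_
        rw [← hB2, ← hB1]
        simp
      · injection hB with hB1 hB2
        refine wl_notin hstart hpos hmono hj2 ?_
        rw [← hB2, ← hB1]
        simp
      · injection hB with hB1 hB2
        refine wl_notin hstart hpos hmono hj2 ?_
        rw [← hB2, ← hB1]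
        simp
      · refine wl_notin hstart hpos hmono hj2 ?_
        rw [← hB, ← hs]
        simp

def ValidI (i : ℕ) (σ : List (Conn × ℕ)) : Prop :=
  List.Pairwise (· < ·) (σ.map Prod.snd) ∧ (σ.map Prod.snd).getLast? = some i

lemma pairwise_of_valid {i : ℕ} {σ : List (Conn × ℕ)} (h : ValidI i σ) :
    List.Pairwise (fun a b : Conn × ℕ => a.2 < b.2) σ :=
  (List.pairwise_map.1 h.1)

lemma valid_move {i : ℕ} {σ : List (Conn × ℕ)} {V' : List Λ}
    (hv : ValidI i σ) (hm : MoveConc Winf l σ V') :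
    ∃ σ', ValidI i σ' ∧ V' = render Winf l σ' := by
  obtain ⟨hpw, hlast⟩ := hv
  rcases hm with ⟨σ₁, j, σ₂, ⟨hσ, hV⟩ | ⟨hσ, hV⟩⟩ | ⟨σ₁, c, d, j, j', σ₂, hσ, hsp, hV⟩
  · subst hσ
    rcases hV with hV | hV
    · exact ⟨σ₁ ++ (Conn.q, j) :: σ₂, ⟨by simpa using hpw, by simpa using hlast⟩, hV⟩
    · exact ⟨σ₁ ++ (Conn.f1, j) :: σ₂, ⟨by simpa using hpw, by simpa using hlast⟩, hV⟩
  · subst hσ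
    exact ⟨σ₁ ++ (Conn.p, j) :: σ₂, ⟨by simpa using hpw, by simpa using hlast⟩, hV⟩
  · subst hσ
    refine ⟨σ₁ ++ (c, j') :: σ₂, ⟨?_, ?_⟩, hV⟩
    · have hsub : (σ₁.map Prod.snd ++ j' :: σ₂.map Prod.snd).Sublist
          (σ₁.map Prod.snd ++ j :: j' :: σ₂.map Prod.snd) :=
        (List.sublist_cons_self _ _).append_left _
      have hpw' : List.Pairwise (· < ·)
          (σ₁.map Prod.snd ++ j :: j' :: σ₂.map Prod.snd) := by simpa using hpw
      have := hpw'.sublist hsub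
      simpa using this
    · have h1 : (σ₁.map Prod.snd ++ j :: j' :: σ₂.map Prod.snd).getLast? =
          (σ₁.map Prod.snd ++ j' :: σ₂.map Prod.snd).getLast? := by
        rw [List.getLast?_append, List.getLast?_append, List.getLast?_cons_cons]
      simp only [List.map_append, List.map_cons] at hlast ⊢
      rw [← h1]
      simpa using hlast

lemma step_inv (halpha : ∀ n, Winf n ≠ 2) (hstart : Winf 0 = 3)
    (hend : ∀ i, Winf (l i - 1) = 3) (hpos : ∀ i, 0 < l i) (hmono : StrictMono l)
    (hsf : ∀ n, SquareFree ((List.range n).map Winf))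
    {i : ℕ} {V V' : List Λ} (hst : Step V V')
    (hv : ∃ σ, ValidI i σ ∧ V = render Winf l σ) :
    ∃ σ', ValidI i σ' ∧ V' = render Winf l σ' := by
  obtain ⟨σ, hvσ, rfl⟩ := hv
  obtain ⟨U, X, T, hX, hVeq, hV'⟩ := hst
  have hm := core halpha hstart hend hpos hmono (fun n => hsf n) σ
    (pairwise_of_valid hvσ) hX hVeq
  obtain ⟨σ', h1, h2⟩ := valid_move hvσ hm
  exact ⟨σ', h1, hV'.trans h2⟩

lemma reaches_inv (halpha : ∀ n, Winf n ≠ 2) (hstart : Winf 0 = 3)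
    (hend : ∀ i, Winf (l i - 1) = 3) (hpos : ∀ i, 0 < l i) (hmono : StrictMono l)
    (hsf : ∀ n, SquareFree ((List.range n).map Winf))
    {i : ℕ} {V V' : List Λ} (h : Reaches V V')
    (hv : ∃ σ, ValidI i σ ∧ V = render Winf l σ) :
    ∃ σ', ValidI i σ' ∧ V' = render Winf l σ' := by
  induction h with
  | refl => exact hv
  | tail _ hstep ih => exact step_inv halpha hstart hend hpos hmono hsf hstep ih

lemma not_sf_f (σ₁ σ₂ : List (Conn × ℕ)) (j : ℕ) :
    ¬ SquareFree (render Winf l (σ₁ ++ (Conn.f, j) :: σ₂)) := by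
  intro hs
  refine hs ab (by simp [ab]) ⟨render Winf l σ₁ ++ [2, 0, 1, 0, 2],
    [2] ++ Wl Winf l j ++ render Winf l σ₂, ?_⟩
  simp [render, connSegs, ab, aba, abab]

lemma not_sf_f1 (σ₁ σ₂ : List (Conn × ℕ)) (j : ℕ) :
    ¬ SquareFree (render Winf l (σ₁ ++ (Conn.f1, j) :: σ₂)) := by
  intro hs
  refine hs ab (by simp [ab]) ⟨render Winf l σ₁ ++ [2],
    [2] ++ Wl Winf l j ++ render Winf l σ₂, ?_⟩
  simp [render, connSegs, ab, abab]

lemma not_sf_adj (hmono : StrictMono l) {c d : Conn} {j j' : ℕ} (hjj : j < j')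
    (K : List Λ) (hK : J (connSegs c) = K ++ J (connSegs d))
    (σ₁ σ₂ : List (Conn × ℕ)) :
    ¬ SquareFree (render Winf l (σ₁ ++ (c, j) :: (d, j') :: σ₂)) := by
  intro hs
  obtain ⟨ρ, hρ⟩ := Wl_prefix (Winf := Winf) hmono hjj
  refine hs (J (connSegs d) ++ [2] ++ Wl Winf l j) (by simp)
    ⟨render Winf l σ₁ ++ K, ρ ++ render Winf l σ₂, ?_⟩
  have hrw : render Winf l (σ₁ ++ (c, j) :: (d, j') :: σ₂) =
      J (segsOf Winf l σ₁) ++ (J (connSegs c) ++ 2 :: Wl Winf l j)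
        ++ (J (connSegs d) ++ 2 :: Wl Winf l j') ++ J (segsOf Winf l σ₂) := by
    simp [render]
  rw [hrw, hK, hρ]
  simp [render, List.append_assoc]

lemma nice (hmono : StrictMono l) {i : ℕ} {σ : List (Conn × ℕ)} (hv : ValidI i σ)
    (hsf' : SquareFree (render Winf l σ)) :
    σ = [(Conn.q, i)] ∨ σ = [(Conn.p, i)] ∨ ∃ j < i, σ = [(Conn.p, j), (Conn.q, i)] := by
  rcases σ with _ | ⟨⟨c1, j1⟩, σt⟩
  · exact absurd hv.2 (by simp)
  rcases σt with _ | ⟨⟨c2, j2⟩, σt2⟩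
  · have hj : j1 = i := by simpa using hv.2
    subst hj
    cases c1
    case f => exact absurd hsf' (not_sf_f [] [] j1)
    case f1 => exact absurd hsf' (not_sf_f1 [] [] j1)
    case q => exact Or.inl rfl
    case p => exact Or.inr (Or.inl rfl)
  rcases σt2 with _ | ⟨⟨c3, j3⟩, σt3⟩
  · -- two chunks
    have hj2 : j2 = i := by simpa using hv.2
    subst hj2
    have hj1 : j1 < j2 := by
      have := hv.1
      simp only [List.map_cons, List.map_nil, List.pairwise_cons] at this
      exact this.1 j2 (by simp)
    cases c1
    case f => exact absurd hsf' (not_sf_f [] [(c2, j2)] j1)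
    case f1 => exact absurd hsf' (not_sf_f1 [] [(c2, j2)] j1)
    case q =>
      cases c2
      case f => exact absurd hsf' (not_sf_f [(Conn.q, j1)] [] j2)
      case f1 => exact absurd hsf' (not_sf_f1 [(Conn.q, j1)] [] j2)
      case q => exact absurd hsf' (not_sf_adj hmono hj1 [] rfl [] [])
      case p => exact absurd hsf' (not_sf_adj hmono hj1 [2, 0, 1, 0] (by rfl) [] [])
    case p =>
      cases c2
      case f => exact absurd hsf' (not_sf_f [(Conn.p, j1)] [] j2)
      case f1 => exact absurd hsf' (not_sf_f1 [(Conn.p, j1)] [] j2)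
      case q => exact Or.inr (Or.inr ⟨j1, hj1, rfl⟩)
      case p => exact absurd hsf' (not_sf_adj hmono hj1 [] rfl [] [])
  · -- at least three chunks : impossible
    exfalso
    have hj1 : j1 < j2 := by
      have := hv.1
      simp only [List.map_cons, List.pairwise_cons] at this
      exact this.1 j2 (by simp)
    have hj2 : j2 < j3 := by
      have := hv.1
      simp only [List.map_cons, List.pairwise_cons] at this
      exact this.2.1 j3 (by simp)
    cases c1
    case f => exact absurd hsf' (not_sf_f [] _ j1)
    case f1 => exact absurd hsf' (not_sf_f1 [] _ j1)
    case q =>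
      cases c2
      case f => exact absurd hsf' (not_sf_f [(Conn.q, j1)] _ j2)
      case f1 => exact absurd hsf' (not_sf_f1 [(Conn.q, j1)] _ j2)
      case q => exact absurd hsf' (not_sf_adj hmono hj1 [] rfl [] _)
      case p => exact absurd hsf' (not_sf_adj hmono hj1 [2, 0, 1, 0] (by rfl) [] _)
    case p =>
      cases c2
      case f => exact absurd hsf' (not_sf_f [(Conn.p, j1)] _ j2)
      case f1 => exact absurd hsf' (not_sf_f1 [(Conn.p, j1)] _ j2)
      case p => exact absurd hsf' (not_sf_adj hmono hj1 [] rfl [] _)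
      case q =>
        cases c3
        case f => exact absurd hsf' (not_sf_f [(Conn.p, j1), (Conn.q, j2)] _ j3)
        case f1 => exact absurd hsf' (not_sf_f1 [(Conn.p, j1), (Conn.q, j2)] _ j3)
        case q => exact absurd hsf' (not_sf_adj hmono hj2 [] rfl [(Conn.p, j1)] _)
        case p => exact absurd hsf' (not_sf_adj hmono hj2 [2, 0, 1, 0] (by rfl) [(Conn.p, j1)] _)

lemma reach_append {V V' B : List Λ} (h : Reaches V V') : Reaches (V ++ B) (V' ++ B) := by
  induction h with
  | refl => exact .refl
  | tail _ hstep ih =>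
      refine ih.tail ?_
      obtain ⟨U, X, T, hX, h1, h2⟩ := hstep
      exact ⟨U, X, T ++ B, hX, by rw [h1]; simp, by rw [h2]; simp⟩

lemma step_move1 (σ₁ σ₂ : List (Conn × ℕ)) (j : ℕ) :
    Step (render Winf l (σ₁ ++ (Conn.f, j) :: σ₂))
      (render Winf l (σ₁ ++ (Conn.q, j) :: σ₂)) :=
  ⟨render Winf l σ₁ ++ [2, 0, 1, 0, 2], [0, 1], [2] ++ Wl Winf l j ++ render Winf l σ₂,
    by simp, by simp [render, connSegs, aba, abab], by simp [render, connSegs, aba, ab]⟩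

lemma step_move2 (σ₁ σ₂ : List (Conn × ℕ)) (j : ℕ) :
    Step (render Winf l (σ₁ ++ (Conn.f, j) :: σ₂))
      (render Winf l (σ₁ ++ (Conn.f1, j) :: σ₂)) :=
  ⟨render Winf l σ₁, [2, 0, 1, 0], [1, 2] ++ Wl Winf l j ++ render Winf l σ₂,
    by simp, by simp [render, connSegs, aba, abab], by simp [render, connSegs, abab]⟩

lemma step_move3 (σ₁ σ₂ : List (Conn × ℕ)) (j : ℕ) :
    Step (render Winf l (σ₁ ++ (Conn.f1, j) :: σ₂))
      (render Winf l (σ₁ ++ (Conn.p, j) :: σ₂)) :=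
  ⟨render Winf l σ₁ ++ [2], [0, 1], [2] ++ Wl Winf l j ++ render Winf l σ₂,
    by simp, by simp [render, connSegs, abab], by simp [render, connSegs, ab]⟩

lemma step_move4 (hmono : StrictMono l) {c d : Conn} {j j' : ℕ} (hjj : j < j')
    (K : List Λ) (hK : J (connSegs c) = K ++ J (connSegs d)) (σ₁ σ₂ : List (Conn × ℕ)) :
    Step (render Winf l (σ₁ ++ (c, j) :: (d, j') :: σ₂))
      (render Winf l (σ₁ ++ (c, j') :: σ₂)) := by
  obtain ⟨ρ, hρ⟩ := Wl_prefix (Winf := Winf) hmono hjj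
  refine ⟨render Winf l σ₁ ++ K, J (connSegs d) ++ [2] ++ Wl Winf l j,
    ρ ++ render Winf l σ₂, by simp, ?_, ?_⟩
  · have hrw : render Winf l (σ₁ ++ (c, j) :: (d, j') :: σ₂) =
        J (segsOf Winf l σ₁) ++ (J (connSegs c) ++ 2 :: Wl Winf l j)
          ++ (J (connSegs d) ++ 2 :: Wl Winf l j') ++ J (segsOf Winf l σ₂) := by
      simp [render]
    rw [hrw, hK, hρ]
    simp [render, List.append_assoc]
  · have hrw : render Winf l (σ₁ ++ (c, j') :: σ₂) =
        J (segsOf Winf l σ₁) ++ (J (connSegs c) ++ 2 :: Wl Winf l j')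
          ++ J (segsOf Winf l σ₂) := by
      simp [render]
    rw [hrw, hK, hρ]
    simp [render, List.append_assoc]

def stdσ (i : ℕ) : List (Conn × ℕ) := (List.range (i + 1)).map (fun t => (Conn.f, t))

lemma stdσ_succ (i : ℕ) : stdσ (i + 1) = stdσ i ++ [(Conn.f, i + 1)] := by
  simp [stdσ, List.range_succ]

lemma valid_std (i : ℕ) : ValidI i (stdσ i) := by
  constructor
  · have : (stdσ i).map Prod.snd = List.range (i + 1) := by
      simp [stdσ, List.map_map, Function.comp]
    rw [this]
    exact List.pairwise_lt_range
  · have : (stdσ i).map Prod.snd = List.range (i + 1) := by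
      simp [stdσ, List.map_map, Function.comp]
    rw [this, List.range_succ, gl (by simp)]
    simp

lemma render_append (σ₁ σ₂ : List (Conn × ℕ)) :
    render Winf l (σ₁ ++ σ₂) = render Winf l σ₁ ++ render Winf l σ₂ := by
  simp [render]

lemma reach_single (hmono : StrictMono l) (i : ℕ) :
    Reaches (render Winf l (stdσ i)) (render Winf l [(Conn.f, i)]) := by
  induction i with
  | zero => exact .refl
  | succ n ih =>
      have h1 : Reaches (render Winf l (stdσ (n + 1)))
          (render Winf l ([(Conn.f, n)] ++ [(Conn.f, n + 1)])) := by
        rw [stdσ_succ, render_append, render_append]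
        exact reach_append ih
      refine h1.tail ?_
      exact step_move4 hmono (Nat.lt_succ_self n) [] rfl [] []

lemma reach_pair (hmono : StrictMono l) {j i : ℕ} (hji : j < i) :
    Reaches (render Winf l (stdσ i)) (render Winf l [(Conn.f, j), (Conn.f, i)]) := by
  induction i, hji using Nat.le_induction with
  | base =>
      rw [stdσ_succ, render_append,
        show render Winf l [(Conn.f, j), (Conn.f, j + 1)] =
            render Winf l [(Conn.f, j)] ++ render Winf l [(Conn.f, j + 1)] from
          render_append [(Conn.f, j)] [(Conn.f, j + 1)]]
      exact reach_append (reach_single hmono j)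
  | succ n hn ih =>
      have h1 : Reaches (render Winf l (stdσ (n + 1)))
          (render Winf l ([(Conn.f, j), (Conn.f, n)] ++ [(Conn.f, n + 1)])) := by
        rw [stdσ_succ, render_append, render_append]
        exact reach_append ih
      refine h1.tail ?_
      exact step_move4 hmono (Nat.lt_succ_self n) [] rfl [(Conn.f, j)] []

lemma no_move_single {c : Conn} (hc1 : c ≠ Conn.f) (hc2 : c ≠ Conn.f1) (j : ℕ)
    (V' : List Λ) : ¬ MoveConc Winf l [(c, j)] V' := by
  rintro (⟨σ₁, j', σ₂, ⟨hσ, -⟩ | ⟨hσ, -⟩⟩ | ⟨σ₁, c', d', j', j'', σ₂, hσ, -, -⟩)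
  · rcases σ₁ with _ | ⟨e, σ₁⟩ <;> simp_all
  · rcases σ₁ with _ | ⟨e, σ₁⟩ <;> simp_all
  · rcases σ₁ with _ | ⟨e, σ₁⟩ <;> simp_all

lemma no_move_pq (j j' : ℕ) (V' : List Λ) :
    ¬ MoveConc Winf l [(Conn.p, j), (Conn.q, j')] V' := by
  rintro (⟨σ₁, m, σ₂, ⟨hσ, -⟩ | ⟨hσ, -⟩⟩ | ⟨σ₁, c', d', m, m', σ₂, hσ, hsp, -⟩)
  · rcases σ₁ with _ | ⟨e, _ | ⟨e2, σ₁⟩⟩ <;> simp_all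
  · rcases σ₁ with _ | ⟨e, _ | ⟨e2, σ₁⟩⟩ <;> simp_all
  · rcases σ₁ with _ | ⟨e, _ | ⟨e2, σ₁⟩⟩
    · obtain ⟨⟨hc, -⟩, ⟨hd, -⟩, -⟩ : (Conn.p = c' ∧ j = m) ∧ (Conn.q = d' ∧ j' = m') ∧ σ₂ = [] := by
        simpa using hσ
      rw [← hc, ← hd] at hsp
      rcases hsp with ⟨h1, -⟩ | ⟨h1, -⟩ | ⟨h1, -⟩ | ⟨h1, -⟩ | ⟨h1, -⟩ | ⟨-, h1⟩ <;>
        exact absurd h1 (by simp [SufPair])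
    · simp_all
    · simp_all

lemma sf_single (halpha : ∀ n, Winf n ≠ 2) (hstart : Winf 0 = 3)
    (hend : ∀ i, Winf (l i - 1) = 3) (hpos : ∀ i, 0 < l i) (hmono : StrictMono l)
    (hsf : ∀ n, SquareFree ((List.range n).map Winf))
    {c : Conn} (hc1 : c ≠ Conn.f) (hc2 : c ≠ Conn.f1) (i : ℕ) :
    SquareFree (render Winf l [(c, i)]) := by
  intro X hX hinf
  obtain ⟨U, T, heq⟩ := hinf
  exact no_move_single hc1 hc2 i _
    (core halpha hstart hend hpos hmono (fun n => hsf n) [(c, i)] (by simp) hX heq.symm)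

lemma sf_pq (halpha : ∀ n, Winf n ≠ 2) (hstart : Winf 0 = 3)
    (hend : ∀ i, Winf (l i - 1) = 3) (hpos : ∀ i, 0 < l i) (hmono : StrictMono l)
    (hsf : ∀ n, SquareFree ((List.range n).map Winf))
    {j i : ℕ} (hji : j < i) :
    SquareFree (render Winf l [(Conn.p, j), (Conn.q, i)]) := by
  intro X hX hinf
  obtain ⟨U, T, heq⟩ := hinf
  exact no_move_pq j i _
    (core halpha hstart hend hpos hmono (fun n => hsf n) [(Conn.p, j), (Conn.q, i)]
      (by simp [hji]) hX heq.symm)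

end SqRed

open SqRed in
theorem reducts_of_S'
    (F P Q : List (Fin 4))
    (hF : F = [2,0,1,0,2,0,1,0,1,2]) (hP : P = [2,0,1,2]) (hQ : Q = [2,0,1,0,2,0,1,2])
    (Winf : ℕ → Fin 4)
    (halpha : ∀ n, Winf n ≠ 2)
    (hstart : Winf 0 = 3)
    (hsf : ∀ n, SquareFree ((List.range n).map Winf))
    (l : ℕ → ℕ) (hmono : StrictMono l) (hpos : ∀ i, 0 < l i)
    (hend : ∀ i, Winf (l i - 1) = 3)
    (W : ℕ → List (Fin 4)) (hW : ∀ i, W i = (List.range (l i)).map Winf)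
    (S : ℕ → List (Fin 4))
    (hS0 : S 0 = F ++ W 0)
    (hSsucc : ∀ i, S (i + 1) = S i ++ F ++ W (i + 1)) :
    ∀ i, Reducts (S i) =
        ({P ++ W i, Q ++ W i} ∪ {R | ∃ j < i, R = P ++ W j ++ Q ++ W i}) ∧
      (Reducts (S i)).ncard = i + 2 := by
  have hWl : ∀ j, W j = Wl Winf l j := fun j => hW j
  have hSr : ∀ m, S m = render Winf l (stdσ m) := by
    intro m
    induction m with
    | zero =>
        rw [hS0, hF, hWl 0]
        have hstd0 : stdσ 0 = [(Conn.f, 0)] := rfl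
        rw [hstd0]
        simp [render, connSegs, aba, abab, Wl]
    | succ n ih =>
        rw [hSsucc n, ih, stdσ_succ, render_append, hF, hWl (n + 1)]
        simp [render, connSegs, aba, abab, Wl]
  intro i
  have hrQ : render Winf l [(Conn.q, i)] = Q ++ W i := by
    rw [hQ, hWl]; simp [render, connSegs, aba, ab]
  have hrP : render Winf l [(Conn.p, i)] = P ++ W i := by
    rw [hP, hWl]; simp [render, connSegs, ab]
  have hrPQ : ∀ j, render Winf l [(Conn.p, j), (Conn.q, i)] = P ++ W j ++ Q ++ W i := by
    intro j
    rw [hP, hQ, hWl, hWl]; simp [render, connSegs, aba, ab]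
  have hseteq : Reducts (S i) =
      ({P ++ W i, Q ++ W i} ∪ {R | ∃ j < i, R = P ++ W j ++ Q ++ W i}) := by
    ext R
    constructor
    · rintro ⟨hre, hsfR⟩
      rw [hSr i] at hre
      obtain ⟨σ, hvσ, rfl⟩ := reaches_inv halpha hstart hend hpos hmono hsf hre
        ⟨stdσ i, valid_std i, rfl⟩
      rcases nice hmono hvσ hsfR with rfl | rfl | ⟨j, hj, rfl⟩
      · rw [hrQ]
        exact Set.mem_union_left _ (Set.mem_insert_of_mem _ rfl)
      · rw [hrP]
        exact Set.mem_union_left _ (Set.mem_insert _ _)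
      · rw [hrPQ j]
        exact Set.mem_union_right _ ⟨j, hj, rfl⟩
    · intro hmem
      simp only [Set.mem_union, Set.mem_insert_iff, Set.mem_singleton_iff,
        Set.mem_setOf_eq] at hmem
      rcases hmem with (rfl | rfl) | ⟨j, hj, rfl⟩
      · refine ⟨?_, ?_⟩
        · rw [hSr i, ← hrP]
          exact ((reach_single hmono i).tail (step_move2 [] [] i)).tail (step_move3 [] [] i)
        · rw [← hrP]
          exact sf_single halpha hstart hend hpos hmono hsf (by simp) (by simp) i
      · refine ⟨?_, ?_⟩
        · rw [hSr i, ← hrQ]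
          exact (reach_single hmono i).tail (step_move1 [] [] i)
        · rw [← hrQ]
          exact sf_single halpha hstart hend hpos hmono hsf (by simp) (by simp) i
      · refine ⟨?_, ?_⟩
        · rw [hSr i, ← hrPQ j]
          exact (((reach_pair hmono hj).tail (step_move2 [] [(Conn.f, i)] j)).tail
            (step_move3 [] [(Conn.f, i)] j)).tail (step_move1 [(Conn.p, j)] [] i)
        · rw [← hrPQ j]
          exact sf_pq halpha hstart hend hpos hmono hsf hj
  refine ⟨hseteq, ?_⟩
  rw [hseteq]
  have hlenW : ∀ j, (W j).length = l j := by intro j; rw [hW]; simp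
  have himg : {R | ∃ j < i, R = P ++ W j ++ Q ++ W i} =
      (fun j => P ++ W j ++ Q ++ W i) '' Set.Iio i := by
    ext R
    simp only [Set.mem_setOf_eq, Set.mem_image, Set.mem_Iio]
    constructor
    · rintro ⟨j, hj, rfl⟩; exact ⟨j, hj, rfl⟩
    · rintro ⟨j, hj, rfl⟩; exact ⟨j, hj, rfl⟩
  have hinj : Set.InjOn (fun j => P ++ W j ++ Q ++ W i) (Set.Iio i) := by
    intro a _ b _ hab
    have := congrArg List.length hab
    simp only [List.length_append, hlenW, hP, hQ] at this
    exact hmono.injective (by omega)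
  have hIio : (Set.Iio i).ncard = i := by
    have : (Set.Iio i) = (↑(Finset.range i) : Set ℕ) := by ext n; simp
    rw [this, Set.ncard_coe_finset, Finset.card_range]
  have himgcard : ((fun j => P ++ W j ++ Q ++ W i) '' Set.Iio i).ncard = i := by
    rw [Set.ncard_image_of_injOn hinj, hIio]
  have hfin : ((fun j => P ++ W j ++ Q ++ W i) '' Set.Iio i).Finite :=
    (Set.finite_Iio i).image _
  have hQnotin : Q ++ W i ∉ (fun j => P ++ W j ++ Q ++ W i) '' Set.Iio i := by
    rintro ⟨j, -, hj⟩
    have := congrArg List.length hj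
    simp only [List.length_append, hlenW, hP, hQ] at this
    simp at this
  have hPnotin : P ++ W i ∉ insert (Q ++ W i)
      ((fun j => P ++ W j ++ Q ++ W i) '' Set.Iio i) := by
    intro h
    rcases Set.mem_insert_iff.1 h with h | ⟨j, -, hj⟩
    · have := congrArg List.length h
      simp only [List.length_append, hlenW, hP, hQ] at this
      simp at this
    · have := congrArg List.length hj
      simp only [List.length_append, hlenW, hP, hQ] at this
      simp at this
  rw [himg, Set.insert_union, Set.singleton_union,
    Set.ncard_insert_of_notMem hPnotin (hfin.insert _),
    Set.ncard_insert_of_notMem hQnotin hfin, himgcard]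

/-- With `F = xabaxababx`, `P = xabx`, `Q = xabaxabx` over `{a, b, x, y}`
(encoded in `Fin 4` as `a = 0`, `b = 1`, `x = 2`, `y = 3`), let `Winf` be an infinite
square-free word over `{a, b, y}` starting with `y`, let `W i` (for `i = 0, 1, …`,
corresponding to `W_{i+1}` in the paper) be prefixes of `Winf` of strictly increasing
lengths each ending with `y`, and let `S i = F W 0 F W 1 ⋯ F W i`. Then the set of
square-free reducts of `S i` is exactly
`{P ++ W i, Q ++ W i} ∪ {P ++ W j ++ Q ++ W i : j < i}`, and `r(S i) = i + 2`. -/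
theorem reducts_of_S
    (F P Q : List (Fin 4))
    (hF : F = [2,0,1,0,2,0,1,0,1,2]) (hP : P = [2,0,1,2]) (hQ : Q = [2,0,1,0,2,0,1,2])
    (Winf : ℕ → Fin 4)
    (halpha : ∀ n, Winf n ≠ 2)
    (hstart : Winf 0 = 3)
    (hsf : ∀ n, SquareFree ((List.range n).map Winf))
    (l : ℕ → ℕ) (hmono : StrictMono l) (hpos : ∀ i, 0 < l i)
    (hend : ∀ i, Winf (l i - 1) = 3)
    (W : ℕ → List (Fin 4)) (hW : ∀ i, W i = (List.range (l i)).map Winf)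
    (S : ℕ → List (Fin 4))
    (hS0 : S 0 = F ++ W 0)
    (hSsucc : ∀ i, S (i + 1) = S i ++ F ++ W (i + 1)) :
    ∀ i, Reducts (S i) =
        ({P ++ W i, Q ++ W i} ∪ {R | ∃ j < i, R = P ++ W j ++ Q ++ W i}) ∧
      (Reducts (S i)).ncard = i + 2 :=
  reducts_of_S' F P Q hF hP hQ Winf halpha hstart hsf l hmono hpos hend W hW S hS0 hSsucc
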